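/- Let R be a commutative ring and let a, b, u, v ∈ R satisfy a·b = 0 and u·a + v·b = 1. Fix a monomial order on R[x₁,…,xₛ]. Let g_a, g_b ∈ R[x₁,…,xₛ] be nonzero polynomials such that lc(g_a) divides a, lc(g_a) ∉ aR, lc(g_b) divides b, and lc(g_b) ∉ bR. Put δ = lm(g_a) ⊔ lm(g_b) (componentwise maximum of exponent vectors) and define f = u·a·lc(g_a)·X^{δ − lm(g_b)}·g_b + v·b·lc(g_b)·X^{δ − lm(g_a)}·g_a. Then f ≠ 0, lm(f) = δ, and lc(f) = lc(g_a)·lc(g_b); that is, the leading term of f is lc(g_a)·lc(g_b)·X^{δ}. -/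

import Mathlib

open MvPolynomial

/-- The leading monomial (largest exponent vector of the support) of a multivariate
polynomial with respect to a monomial order. -/
noncomputable def MonomialOrder.lm {σ R : Type*} [CommSemiring R] (m : MonomialOrder σ)
    (f : MvPolynomial σ R) : σ →₀ ℕ :=
  m.toSyn.symm (f.support.sup fun d => m.toSyn d)

/-- The leading coefficient of a multivariate polynomial with respect to a monomial order. -/
noncomputable def MonomialOrder.lc {σ R : Type*} [CommSemiring R] (m : MonomialOrder σ)
    (f : MvPolynomial σ R) : R :=
  f.coeff (m.lm f)

lemma MonomialOrder.lm_mem_support {σ R : Type*} [CommSemiring R] (m : MonomialOrder σ)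
    {f : MvPolynomial σ R} (hf : f ≠ 0) : m.lm f ∈ f.support := by
  obtain ⟨d, hd, he⟩ := Finset.exists_mem_eq_sup f.support
    (Finset.nonempty_iff_ne_empty.mpr (mt MvPolynomial.support_eq_empty.mp hf)) (fun d => m.toSyn d)
  rw [MonomialOrder.lm, he, AddEquiv.symm_apply_apply]
  exact hd

lemma MonomialOrder.le_lm {σ R : Type*} [CommSemiring R] (m : MonomialOrder σ)
    {f : MvPolynomial σ R} {d : σ →₀ ℕ} (hd : d ∈ f.support) :
    m.toSyn d ≤ m.toSyn (m.lm f) := by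
  rw [MonomialOrder.lm, AddEquiv.apply_symm_apply]
  exact Finset.le_sup hd

/-- The leading term of the recombined polynomial: if `a·b = 0`, `u·a + v·b = 1`,
`lc(g_a) ∣ a`, `lc(g_a) ∉ aR`, `lc(g_b) ∣ b`, `lc(g_b) ∉ bR`, then
`f = u·a·lc(g_a)·X^{δ−lm(g_b)}·g_b + v·b·lc(g_b)·X^{δ−lm(g_a)}·g_a` is nonzero with
leading monomial `δ = lm(g_a) ⊔ lm(g_b)` and leading coefficient `lc(g_a)·lc(g_b)`. -/
theorem leadTerm_recombination {σ R : Type*} [CommRing R] [Finite σ]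
    (m : MonomialOrder σ) (a b u v : R) (hab : a * b = 0) (huv : u * a + v * b = 1)
    (ga gb : MvPolynomial σ R) (hga : ga ≠ 0) (hgb : gb ≠ 0)
    (h1 : m.lc ga ∣ a) (h2 : m.lc ga ∉ Ideal.span ({a} : Set R))
    (h3 : m.lc gb ∣ b) (h4 : m.lc gb ∉ Ideal.span ({b} : Set R)) :
    let δ := m.lm ga ⊔ m.lm gb
    let f := monomial (δ - m.lm gb) (u * a * m.lc ga) * gb
           + monomial (δ - m.lm ga) (v * b * m.lc gb) * ga
    f ≠ 0 ∧ m.lm f = δ ∧ m.lc f = m.lc ga * m.lc gb := by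
  classical
  intro δ f
  have hA : m.lm ga ≤ δ := le_sup_left
  have hB : m.lm gb ≤ δ := le_sup_right
  have hAδ : δ - m.lm ga + m.lm ga = δ := tsub_add_cancel_of_le hA
  have hBδ : δ - m.lm gb + m.lm gb = δ := tsub_add_cancel_of_le hB
  -- the coefficient of f at δ
  have hcoeff : f.coeff δ = m.lc ga * m.lc gb := by
    have c1 : coeff δ (monomial (δ - m.lm gb) (u * a * m.lc ga) * gb)
        = (u * a * m.lc ga) * m.lc gb := by
      have h := coeff_monomial_mul (m.lm gb) (δ - m.lm gb) (u * a * m.lc ga) gb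
      rw [hBδ] at h
      rw [h]; rfl
    have c2 : coeff δ (monomial (δ - m.lm ga) (v * b * m.lc gb) * ga)
        = (v * b * m.lc gb) * m.lc ga := by
      have h := coeff_monomial_mul (m.lm ga) (δ - m.lm ga) (v * b * m.lc gb) ga
      rw [hAδ] at h
      rw [h]; rfl
    rw [coeff_add, c1, c2]
    linear_combination (m.lc ga * m.lc gb) * huv
  -- nonvanishing of the coefficient
  have hne : m.lc ga * m.lc gb ≠ 0 := by
    intro h0
    apply h2
    rw [Ideal.mem_span_singleton]
    obtain ⟨d, hd⟩ := h3
    refine ⟨u * m.lc ga, ?_⟩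
    have : m.lc ga * b = 0 := by rw [hd, ← mul_assoc, h0, zero_mul]
    linear_combination (- m.lc ga) * huv + v * this
  have hδsupp : δ ∈ f.support := by
    rw [MvPolynomial.mem_support_iff, hcoeff]; exact hne
  have hf0 : f ≠ 0 := fun h => by simp [h] at hδsupp
  -- all exponents in the support of f are ≤ δ
  have hbound : ∀ e ∈ f.support, m.toSyn e ≤ m.toSyn δ := by
    intro e he
    have := MvPolynomial.support_add he
    rw [Finset.mem_union] at this
    rcases this with h | h
    · have h' := MvPolynomial.support_mul _ _ h
      rw [Finset.mem_add] at h'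
      obtain ⟨e1, he1, e2, he2, rfl⟩ := h'
      have he1' : e1 = δ - m.lm gb := by
        have := MvPolynomial.support_monomial_subset he1
        simpa using this
      subst he1'
      calc m.toSyn (δ - m.lm gb + e2)
          = m.toSyn (δ - m.lm gb) + m.toSyn e2 := by rw [map_add]
        _ ≤ m.toSyn (δ - m.lm gb) + m.toSyn (m.lm gb) :=
            add_le_add le_rfl (m.le_lm he2)
        _ = m.toSyn δ := by rw [← map_add, hBδ]
    · have h' := MvPolynomial.support_mul _ _ h
      rw [Finset.mem_add] at h'
      obtain ⟨e1, he1, e2, he2, rfl⟩ := h'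
      have he1' : e1 = δ - m.lm ga := by
        have := MvPolynomial.support_monomial_subset he1
        simpa using this
      subst he1'
      calc m.toSyn (δ - m.lm ga + e2)
          = m.toSyn (δ - m.lm ga) + m.toSyn e2 := by rw [map_add]
        _ ≤ m.toSyn (δ - m.lm ga) + m.toSyn (m.lm ga) :=
            add_le_add le_rfl (m.le_lm he2)
        _ = m.toSyn δ := by rw [← map_add, hAδ]
  have hlm : m.lm f = δ := by
    have h1' : m.toSyn (m.lm f) ≤ m.toSyn δ :=
      hbound _ (m.lm_mem_support hf0)
    have h2' : m.toSyn δ ≤ m.toSyn (m.lm f) := m.le_lm hδsupp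
    exact m.toSyn.injective (le_antisymm h1' h2')
  exact ⟨hf0, hlm, by rw [MonomialOrder.lc, hlm]; exact hcoeff⟩
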